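/- For every n ≥ 1, the terms of the sequence satisfy x_{n+1} > x_n^{d+1}. -/

import Mathlib

lemma aeval_lower_bound (F : Polynomial ℤ)
    (hFnonneg : ∀ i, 0 ≤ F.coeff i) (hF0 : F.coeff 0 = 1) (hFdeg : 1 ≤ F.natDegree)
    (q : ℚ) (hq : 0 ≤ q) :
    1 + q ^ F.natDegree ≤ Polynomial.aeval q F := by
  have hFne : F ≠ 0 := by
    intro h; simp [h] at hFdeg
  have hlead : 1 ≤ F.coeff F.natDegree := by
    have h1 := hFnonneg F.natDegree
    have h2 : F.coeff F.natDegree ≠ 0 := by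
      have := Polynomial.leadingCoeff_ne_zero.mpr hFne
      rwa [Polynomial.leadingCoeff] at this
    omega
  rw [Polynomial.aeval_eq_sum_range]
  have hsub : ({0, F.natDegree} : Finset ℕ) ⊆ Finset.range (F.natDegree + 1) := by
    intro i hi
    simp only [Finset.mem_insert, Finset.mem_singleton] at hi
    rcases hi with rfl | rfl <;> simp [Finset.mem_range]
  calc 1 + q ^ F.natDegree
      ≤ ∑ i ∈ ({0, F.natDegree} : Finset ℕ), F.coeff i • q ^ i := by
        rw [Finset.sum_pair (by omega : (0:ℕ) ≠ F.natDegree)]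
        simp only [zsmul_eq_mul, pow_zero, mul_one, hF0, Int.cast_one]
        have : q ^ F.natDegree ≤ (F.coeff F.natDegree : ℚ) * q ^ F.natDegree := by
          have hc : (1:ℚ) ≤ (F.coeff F.natDegree : ℚ) := by exact_mod_cast hlead
          nlinarith [pow_nonneg hq F.natDegree]
        linarith
    _ ≤ ∑ i ∈ Finset.range (F.natDegree + 1), F.coeff i • q ^ i := by
        apply Finset.sum_le_sum_of_subset_of_nonneg hsub
        intro i _ _
        have := hFnonneg i
        have : (0:ℚ) ≤ (F.coeff i : ℚ) := by exact_mod_cast this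
        simpa [zsmul_eq_mul] using mul_nonneg this (pow_nonneg hq i)

/-- for every `n ≥ 1`, the terms of the sequence satisfy
`x (n+1) > x n ^ (d+1)`, where `d = deg F`. -/
theorem stmt_10 (F : Polynomial ℤ)
    (hFnonneg : ∀ i, 0 ≤ F.coeff i) (hF0 : F.coeff 0 = 1) (hFdeg : 1 ≤ F.natDegree)
    (x : ℕ → ℚ) (hxpos : ∀ n, 0 < x n) (hx0 : x 0 = 1) (hx1 : x 1 = 1)
    (hrec : ∀ n, x (n + 2) * x n = (x (n + 1)) ^ 2 * Polynomial.aeval (x (n + 1)) F) :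
    ∀ n : ℕ, 1 ≤ n → x n ^ (F.natDegree + 1) < x (n + 1) := by
  set d := F.natDegree with hd
  have key : ∀ n : ℕ, 1 ≤ n → 1 ≤ x n ∧ x n ^ (d + 1) < x (n + 1) := by
    intro n hn
    induction n with
    | zero => omega
    | succ m ih =>
      rcases Nat.eq_or_lt_of_le hn with h1 | h1
      · -- m + 1 = 1, i.e. m = 0
        have hm : m = 0 := by omega
        subst hm
        refine ⟨by rw [hx1], ?_⟩
        have hrec0 := hrec 0
        rw [hx0, hx1, mul_one] at hrec0
        have hb := aeval_lower_bound F hFnonneg hF0 hFdeg 1 (by norm_num)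
        rw [one_pow] at hb
        rw [hx1, one_pow]
        simp only [one_pow, mul_one] at hrec0
        linarith
      · have hm : 1 ≤ m := by omega
        obtain ⟨hge, hlt⟩ := ih hm
        have hxm := hxpos m
        have hxm1 := hxpos (m + 1)
        have hxm2 := hxpos (m + 2)
        have h1le : 1 ≤ x (m + 1) := by
          calc (1:ℚ) ≤ x m ^ (d + 1) := one_le_pow₀ hge
            _ ≤ x (m + 1) := le_of_lt hlt
        refine ⟨h1le, ?_⟩
        have hmono : x m < x (m + 1) := by
          calc x m ≤ x m ^ (d + 1) := le_self_pow₀ (by linarith) (by omega)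
            _ < x (m + 1) := hlt
        have hb := aeval_lower_bound F hFnonneg hF0 hFdeg (x (m + 1)) (le_of_lt hxm1)
        have hrecm := hrec m
        -- goal : x (m+1) ^ (d+1) < x (m+2)
        rw [← mul_lt_mul_iff_of_pos_right hxm, hrecm]
        have hpow : x (m + 1) ^ (d + 1) * x m < x (m + 1) ^ (d + 1) * x (m + 1) := by
          apply mul_lt_mul_of_pos_left hmono (pow_pos hxm1 _)
        have heq : x (m + 1) ^ (d + 1) * x (m + 1) = x (m + 1) ^ 2 * x (m + 1) ^ d := by
          ring
        have h2 : x (m + 1) ^ 2 * x (m + 1) ^ d < x (m + 1) ^ 2 * Polynomial.aeval (x (m + 1)) F := by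
          apply mul_lt_mul_of_pos_left _ (pow_pos hxm1 2)
          linarith
        linarith
  intro n hn
  exact (key n hn).2
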